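/- arXiv:2409.07979 — 4 statements merged into one kernel-verified Lean document; each statement's English description precedes it below -/
import Mathlib

section
/- Let k ∈ ℕ and let Q = {q_1, q_2, …, q_k} be a family of non-constant integral polynomials with q_i(0) = 0 for every 1 ≤ i ≤ k. Then there exist 1 ≤ d ≤ k and a subfamily A = {p_1, …, p_d} ⊆ {q_1, …, q_k} such that A satisfies condition (♠) and {q_1, …, q_k} ⊆ {p_i^{[m]} : 1 ≤ i ≤ d, m ∈ ℤ}. -/
open Filter Topology Function Set

/-- Condition `(♠)` for a family `p = {p 0, …, p (d-1)}` of integral polynomials: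
all vanish at `0`; the first `s` of them are linear `pᵢ n = aᵢ n` with `a₀, …, a_{s-1}`
distinct nonzero integers; the remaining ones have degree at least `2`; and for distinct
nonlinear members, `p_j^{[k]} ≠ p_i^{[t]}` for all `k, t ∈ ℤ`, where
`p^{[j]} n = p (n + j) - p j`. -/
def SpadeCondition {d : ℕ} (p : Fin d → ℤ → ℤ) : Prop :=
  (∀ i, p i 0 = 0) ∧
  ∃ s : ℕ, s ≤ d ∧
    (∃ a : Fin d → ℤ,
      (∀ i : Fin d, (i : ℕ) < s → a i ≠ 0 ∧ ∀ n : ℤ, p i n = a i * n) ∧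
      (∀ i j : Fin d, (i : ℕ) < s → (j : ℕ) < s → i ≠ j → a i ≠ a j)) ∧
    (∀ i : Fin d, s ≤ (i : ℕ) →
      ∃ q : Polynomial ℚ, (∀ n : ℤ, (p i n : ℚ) = q.eval (n : ℚ)) ∧ 2 ≤ q.natDegree) ∧
    (∀ i j : Fin d, s ≤ (i : ℕ) → s ≤ (j : ℕ) → i ≠ j → ∀ k t : ℤ,
      (fun n : ℤ => p j (n + k) - p j k) ≠ (fun n : ℤ => p i (n + t) - p i t))

/-- **Lemma 4.7 (HSY22-1).** Let `Q = {q 0, …, q (k-1)}` be a family of non-constant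
integral polynomials vanishing at `0`. Then there are `1 ≤ d ≤ k` and a subfamily
`A = {p 0, …, p (d-1)} ⊆ Q` satisfying condition `(♠)` such that every member of `Q` is of
the form `p_i^{[m]}` for some `i` and `m ∈ ℤ`, where `p^{[m]} n = p (n + m) - p m`. -/
theorem exists_spade_subfamily (k : ℕ) (hk : 1 ≤ k) (q : Fin k → ℤ → ℤ)
    (hq : ∀ i, q i 0 = 0 ∧
      ∃ Q : Polynomial ℚ, (∀ n : ℤ, (q i n : ℚ) = Q.eval (n : ℚ)) ∧ 1 ≤ Q.natDegree) :
    ∃ (d : ℕ), 1 ≤ d ∧ d ≤ k ∧ ∃ ι : Fin d → Fin k,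
      SpadeCondition (fun i => q (ι i)) ∧
      ∀ j : Fin k, ∃ (i : Fin d) (m : ℤ),
        q j = fun n : ℤ => q (ι i) (n + m) - q (ι i) m := by
  classical
  haveI : NeZero k := ⟨by omega⟩
  -- the shift relation
  set r : Fin k → Fin k → Prop :=
    fun i j => ∃ m : ℤ, ∀ n : ℤ, q j n = q i (n + m) - q i m with hrdef
  have hrefl : ∀ i, r i i := fun i =>
    ⟨0, fun n => by simp [(hq i).1]⟩
  have hsymm : ∀ {i j}, r i j → r j i := by
    rintro i j ⟨m, hm⟩
    refine ⟨-m, fun n => ?_⟩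
    rw [hm, hm]
    have e1 : n + -m + m = n := by ring
    have e2 : -m + m = 0 := by ring
    rw [e1, e2, (hq i).1]
    ring
  have htrans : ∀ {i j l}, r i j → r j l → r i l := by
    rintro i j l ⟨m, hm⟩ ⟨m', hm'⟩
    refine ⟨m + m', fun n => ?_⟩
    rw [hm', hm, hm]
    have e1 : n + m' + m = n + (m + m') := by ring
    have e2 : m' + m = m + m' := by ring
    rw [e1, e2]
    ring
  -- canonical representative of each class
  set rep : Fin k → Fin k :=
    fun i => (Finset.univ.filter (r i)).min'
      ⟨i, Finset.mem_filter.2 ⟨Finset.mem_univ i, hrefl i⟩⟩ with hrepdef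
  have hrep_r : ∀ i, r i (rep i) := fun i =>
    (Finset.mem_filter.1 (Finset.min'_mem _ _)).2
  have hrep_eq : ∀ i j, r i j → rep i = rep j := by
    intro i j hij
    have : Finset.univ.filter (r i) = Finset.univ.filter (r j) := by
      ext x
      simp only [Finset.mem_filter, Finset.mem_univ, true_and]
      exact ⟨fun h => htrans (hsymm hij) h, fun h => htrans hij h⟩
    simp only [hrepdef]
    congr 1
  have hrep_idem : ∀ i, rep (rep i) = rep i := fun i =>
    (hrep_eq i (rep i) (hrep_r i)).symm
  -- linearity predicate
  set L : Fin k → Prop := fun i => ∃ a : ℤ, a ≠ 0 ∧ ∀ n : ℤ, q i n = a * n with hLdef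
  -- if not linear, degree ≥ 2 witness
  have hdeg2 : ∀ i : Fin k, ¬ L i →
      ∃ Q : Polynomial ℚ, (∀ n : ℤ, (q i n : ℚ) = Q.eval (n : ℚ)) ∧ 2 ≤ Q.natDegree := by
    intro i hnl
    obtain ⟨h0, Q, hQ, hd⟩ := hq i
    refine ⟨Q, hQ, ?_⟩
    by_contra hlt
    push_neg at hlt
    have hd1 : Q.natDegree = 1 := by omega
    have hQeq := Polynomial.eq_X_add_C_of_natDegree_le_one (le_of_eq hd1)
    have hc0 : Q.coeff 0 = 0 := by
      have := hQ 0
      rw [h0] at this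
      have h00 := this.symm
      rw [hQeq] at h00
      simpa using h00
    have hc1 : Q.coeff 1 ≠ 0 := by
      intro hc
      have : Q = Polynomial.C (Q.coeff 0) := by rw [hQeq, hc]; simp
      rw [this, hc0] at hd1
      simp at hd1
    have heval : ∀ n : ℤ, (q i n : ℚ) = Q.coeff 1 * n := by
      intro n
      rw [hQ n, hQeq]
      simp [hc0]
    have ha : (((q i 1 : ℤ) : ℚ)) = Q.coeff 1 := by rw [heval 1]; ring
    apply hnl
    refine ⟨q i 1, ?_, ?_⟩
    · intro h
      rw [h] at ha
      exact hc1 (by exact_mod_cast ha.symm)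
    · intro n
      have : ((q i n : ℤ) : ℚ) = ((q i 1 * n : ℤ) : ℚ) := by
        rw [heval n]
        push_cast
        rw [ha]
      exact_mod_cast this
  -- the set of representatives, split into linear and nonlinear
  set S : Finset (Fin k) := Finset.univ.image rep with hSdef
  have hrep_fix : ∀ x ∈ S, rep x = x := by
    intro x hx
    obtain ⟨i, _, hi⟩ := Finset.mem_image.1 hx
    rw [← hi, hrep_idem]
  set S₁ : Finset (Fin k) := S.filter L with hS₁def
  set S₂ : Finset (Fin k) := S.filter (fun i => ¬ L i) with hS₂def
  set l : List (Fin k) := S₁.sort (· ≤ ·) ++ S₂.sort (· ≤ ·) with hldef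
  have hlen : l.length = S.card := by
    simp only [hldef, List.length_append, Finset.length_sort]
    exact Finset.card_filter_add_card_filter_not L
  have hnodup : l.Nodup := by
    refine List.Nodup.append (Finset.sort_nodup _ _) (Finset.sort_nodup _ _) ?_
    intro x hx hx'
    rw [Finset.mem_sort] at hx hx'
    exact (Finset.mem_filter.1 hx').2 (Finset.mem_filter.1 hx).2
  have hmem_l : ∀ x ∈ S, x ∈ l := by
    intro x hx
    by_cases hL : L x
    · exact List.mem_append_left _ ((Finset.mem_sort _).2 (Finset.mem_filter.2 ⟨hx, hL⟩))
    · exact List.mem_append_right _ ((Finset.mem_sort _).2 (Finset.mem_filter.2 ⟨hx, hL⟩))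
  have hl_mem_S : ∀ x ∈ l, x ∈ S := by
    intro x hx
    rcases List.mem_append.1 hx with h | h
    · exact (Finset.mem_filter.1 ((Finset.mem_sort _).1 h)).1
    · exact (Finset.mem_filter.1 ((Finset.mem_sort _).1 h)).1
  refine ⟨l.length, ?_, ?_, fun i => l.get i, ?_, ?_⟩
  · -- 1 ≤ d
    rw [hlen]
    have : (rep 0) ∈ S := Finset.mem_image.2 ⟨0, Finset.mem_univ _, rfl⟩
    exact Finset.card_pos.2 ⟨_, this⟩
  · -- d ≤ k
    rw [hlen]
    simpa using Finset.card_le_card (Finset.subset_univ S)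
  · -- SpadeCondition
    set s : ℕ := S₁.card with hsdef
    have hget_lin : ∀ i : Fin l.length, (i : ℕ) < s → l.get i ∈ S₁ := by
      intro i hi
      have h1 : (i : ℕ) < (S₁.sort (· ≤ ·)).length := by
        rwa [Finset.length_sort]
      have := List.getElem_append_left (bs := S₂.sort (· ≤ ·)) h1 (h' := i.isLt)
      rw [List.get_eq_getElem, this]
      exact (Finset.mem_sort _).1 (List.getElem_mem h1)
    have hget_nonlin : ∀ i : Fin l.length, s ≤ (i : ℕ) → l.get i ∈ S₂ := by
      intro i hi
      have h1 : (S₁.sort (· ≤ ·)).length ≤ (i : ℕ) := by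
        rwa [Finset.length_sort]
      have := List.getElem_append_right (bs := S₂.sort (· ≤ ·)) h1 (h₂ := i.isLt)
      rw [List.get_eq_getElem, this]
      have h2 : (i : ℕ) - (S₁.sort (· ≤ ·)).length < (S₂.sort (· ≤ ·)).length := by
        have := i.isLt
        simp only [hldef, List.length_append] at this
        omega
      exact (Finset.mem_sort _).1 (List.getElem_mem h2)
    have hget_inj : ∀ i j : Fin l.length, l.get i = l.get j → i = j := by
      intro i j h
      exact (List.Nodup.get_inj_iff hnodup).1 h
    -- key: get values are fixed points of rep
    have hget_fix : ∀ i : Fin l.length, rep (l.get i) = l.get i := by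
      intro i
      exact hrep_fix _ (hl_mem_S _ (List.get_mem l i))
    have hget_eq_of_r : ∀ i j : Fin l.length, r (l.get i) (l.get j) → i = j := by
      intro i j h
      apply hget_inj
      rw [← hget_fix i, ← hget_fix j]
      exact hrep_eq _ _ h
    refine ⟨fun i => (hq _).1, s, ?_, ⟨fun i => q (l.get i) 1, ?_, ?_⟩, ?_, ?_⟩
    · -- s ≤ d
      have : S₁.card + S₂.card = S.card :=
        Finset.card_filter_add_card_filter_not L
      omega
    · -- linear ones
      intro i hi
      obtain ⟨a₀, ha₀, hall⟩ := (Finset.mem_filter.1 (hget_lin i hi)).2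
      have hval : q (l.get i) 1 = a₀ := by rw [hall 1]; ring
      constructor
      · show q (l.get i) 1 ≠ 0
        rw [hval]; exact ha₀
      · intro n
        show q (l.get i) n = q (l.get i) 1 * n
        rw [hval, hall n]
    · -- distinct coefficients
      intro i j hi hj hij hco
      simp only at hco
      obtain ⟨ai, hai, halli⟩ := (Finset.mem_filter.1 (hget_lin i hi)).2
      obtain ⟨aj, haj, hallj⟩ := (Finset.mem_filter.1 (hget_lin j hj)).2
      have hvi : q (l.get i) 1 = ai := by rw [halli 1]; ring
      have hvj : q (l.get j) 1 = aj := by rw [hallj 1]; ring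
      have haij : ai = aj := by rw [← hvi, ← hvj, hco]
      apply hij
      apply hget_eq_of_r
      refine ⟨0, fun n => ?_⟩
      rw [hallj n, halli, halli, (by ring : n + (0:ℤ) = n)]
      rw [haij]; ring
    · -- degree ≥ 2
      intro i hi
      exact hdeg2 _ (Finset.mem_filter.1 (hget_nonlin i hi)).2
    · -- pairwise distinct shifts for nonlinear
      intro i j hi hj hij c t H
      apply hij
      apply hget_eq_of_r
      refine ⟨t - c, fun n => ?_⟩
      have H1 := congrFun H (n - c)
      have H2 := congrFun H (-c)
      simp only at H1 H2
      have e1 : n - c + c = n := by ring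
      have e2 : -c + c = 0 := by ring
      rw [e1] at H1
      rw [e2, (hq _).1] at H2
      have e3 : n - c + t = n + (t - c) := by ring
      have e4 : -c + t = t - c := by ring
      rw [e3] at H1
      rw [e4] at H2
      omega
  · -- coverage
    intro j
    have hmem : rep j ∈ l := hmem_l _ (Finset.mem_image.2 ⟨j, Finset.mem_univ _, rfl⟩)
    obtain ⟨i, hi⟩ := List.mem_iff_get.1 hmem
    obtain ⟨m, hm⟩ := hsymm (hrep_r j)
    refine ⟨i, m, funext fun n => ?_⟩
    show q j n = q (l.get i) (n + m) - q (l.get i) m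
    rw [hm n, hi]
end

section
/- Every topological dynamical system (X,T) has an almost one to one zero dimensional extension: there is a topological dynamical system (X',T') with X' zero dimensional and an almost one to one factor map τ : (X',T') → (X,T). If in addition (X,T) is minimal, then (X',T') is minimal. -/
open Filter Topology Function Set

/-- Iterates of a homeomorphism indexed by `ℕ`. -/
def hpowNat {X : Type*} [TopologicalSpace X] (T : X ≃ₜ X) : ℕ → X ≃ₜ X
  | 0 => Homeomorph.refl X
  | n + 1 => (hpowNat T n).trans T

/-- Iterates of a homeomorphism indexed by `ℤ`. -/
def hpowInt {X : Type*} [TopologicalSpace X] (T : X ≃ₜ X) : ℤ → X ≃ₜ X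
  | Int.ofNat n => hpowNat T n
  | Int.negSucc n => (hpowNat T (n + 1)).symm

/-- The `n`-th iterate (`n : ℤ`) of the homeomorphism `T`, as a map. -/
def hpow {X : Type*} [TopologicalSpace X] (T : X ≃ₜ X) (n : ℤ) : X → X :=
  ⇑(hpowInt T n)

/-- The (two-sided) orbit of `x` under the homeomorphism `T`. -/
def zorbit {X : Type*} [TopologicalSpace X] (T : X ≃ₜ X) (x : X) : Set X :=
  Set.range fun n : ℤ => hpow T n x

/-- `(X,T)` is a minimal t.d.s.: every orbit is dense. -/
def IsMinimalTDS {X : Type*} [TopologicalSpace X] (T : X ≃ₜ X) : Prop :=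
  ∀ x : X, Dense (zorbit T x)

/-- A continuous surjection intertwining the dynamics is almost one to one if the points
with singleton fibre over their image form a dense `Gδ` subset of the domain. -/
def AlmostOneToOne {A B : Type*} [TopologicalSpace A] [TopologicalSpace B] (f : A → B) : Prop :=
  ∃ A₀ : Set A, IsGδ A₀ ∧ Dense A₀ ∧ ∀ a ∈ A₀, f ⁻¹' {f a} = {a}

section HpowLemmas
variable {A B : Type*} [TopologicalSpace A] [TopologicalSpace B]

lemma hpow_zero (T : A ≃ₜ A) (x : A) : hpow T 0 x = x := rfl

lemma hpow_continuous (T : A ≃ₜ A) (n : ℤ) : Continuous (hpow T n) :=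
  (hpowInt T n).continuous

lemma hpowNat_semiconj (T' : A ≃ₜ A) (T : B ≃ₜ B) (f : A → B)
    (h : ∀ a, f (T' a) = T (f a)) (n : ℕ) (a : A) :
    f (hpowNat T' n a) = hpowNat T n (f a) := by
  induction n generalizing a with
  | zero => rfl
  | succ k ih =>
    show f (T' (hpowNat T' k a)) = T (hpowNat T k (f a))
    rw [h, ih]

lemma hpow_semiconj (T' : A ≃ₜ A) (T : B ≃ₜ B) (f : A → B)
    (h : ∀ a, f (T' a) = T (f a)) (n : ℤ) (a : A) :
    f (hpow T' n a) = hpow T n (f a) := by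
  cases n with
  | ofNat m => exact hpowNat_semiconj T' T f h m a
  | negSucc m =>
    show f ((hpowNat T' (m+1)).symm a) = (hpowNat T (m+1)).symm (f a)
    apply (hpowNat T (m+1)).injective
    rw [Homeomorph.apply_symm_apply, ← hpowNat_semiconj T' T f h,
      Homeomorph.apply_symm_apply]

lemma hpow_comm (T : A ≃ₜ A) (n : ℤ) (x : A) :
    T (hpow T n x) = hpow T n (T x) :=
  hpow_semiconj T T T (fun _ => rfl) n x

lemma hpow_succ (T : A ≃ₜ A) (n : ℤ) (x : A) :
    hpow T (n + 1) x = T (hpow T n x) := by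
  cases n with
  | ofNat m =>
    show hpow T (Int.ofNat (m+1)) x = _
    rfl
  | negSucc m =>
    cases m with
    | zero =>
      show hpow T 0 x = T ((hpowNat T 1).symm x)
      have : (hpowNat T 1).symm x = T.symm x := by
        show ((Homeomorph.refl A).trans T).symm x = T.symm x
        simp
      rw [this, hpow_zero, Homeomorph.apply_symm_apply]
    | succ k =>
      show hpow T (Int.negSucc k) x = T ((hpowNat T (k+2)).symm x)
      show (hpowNat T (k+1)).symm x = T ((hpowNat T (k+2)).symm x)
      apply (hpowNat T (k+1)).injective
      rw [Homeomorph.apply_symm_apply,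
        ← hpowNat_semiconj T T T (fun _ => rfl) (k+1)]
      show x = hpowNat T (k+2) ((hpowNat T (k+2)).symm x)
      rw [Homeomorph.apply_symm_apply]

lemma hpow_succ' (T : A ≃ₜ A) (n : ℤ) (x : A) :
    hpow T (n + 1) x = hpow T n (T x) := by
  rw [hpow_succ, hpow_comm]

lemma hpow_pred (T : A ≃ₜ A) (n : ℤ) (x : A) :
    hpow T (n - 1) x = T.symm (hpow T n x) := by
  apply T.injective
  rw [Homeomorph.apply_symm_apply, ← hpow_succ]
  norm_num

lemma hpow_pred' (T : A ≃ₜ A) (n : ℤ) (x : A) :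
    hpow T (n - 1) x = hpow T n (T.symm x) := by
  rw [hpow_pred, hpow_semiconj T T T.symm (fun a => by simp) n x]

lemma hpow_add (T : A ≃ₜ A) (m n : ℤ) (x : A) :
    hpow T (m + n) x = hpow T m (hpow T n x) := by
  induction n using Int.induction_on with
  | zero => rw [add_zero, hpow_zero]
  | succ k ih => rw [← add_assoc, hpow_succ, ih, hpow_succ, hpow_comm]
  | pred k ih => rw [show m + (-(k:ℤ) - 1) = (m + -k) - 1 by ring, hpow_pred, ih, hpow_pred,
      ← hpow_semiconj T T T.symm (fun a => by simp) m]

lemma isGδ_preimage {f : A → B} (hf : Continuous f) {s : Set B} (hs : IsGδ s) :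
    IsGδ (f ⁻¹' s) := by
  obtain ⟨S, hSo, hSc, rfl⟩ := hs
  rw [Set.preimage_sInter]
  exact IsGδ.biInter hSc fun t ht => ((hSo t ht).preimage hf).isGδ

/-- Transfer of minimality along conjugation by a homeomorphism. -/
lemma isMinimalTDS_conj (g : A ≃ₜ B) (T' : A ≃ₜ A) (hm : IsMinimalTDS T') :
    IsMinimalTDS ((g.symm.trans T').trans g) := by
  intro b
  set T'' : B ≃ₜ B := (g.symm.trans T').trans g
  have hsc : ∀ a, g (T' a) = T'' (g a) := by
    intro a
    show g (T' a) = g (T' (g.symm (g a)))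
    rw [Homeomorph.symm_apply_apply]
  have horb : zorbit T'' b = g '' zorbit T' (g.symm b) := by
    unfold zorbit
    rw [← Set.range_comp]
    apply congrArg Set.range
    funext n
    show hpow T'' n b = g (hpow T' n (g.symm b))
    rw [hpow_semiconj T' T'' g hsc n, Homeomorph.apply_symm_apply]
  rw [horb, dense_iff_closure_eq, ← Homeomorph.image_closure,
    (hm (g.symm b)).closure_eq, Set.image_univ, Homeomorph.range_coe]
end HpowLemmas

namespace ZDExt

/-- The Cantor-like cube indexing the codes. -/
abbrev K : Type := (ℤ × ℕ) → Bool

/-- The shift on `K`. -/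
def shiftK : K ≃ₜ K where
  toFun a := fun q => a (q.1 + 1, q.2)
  invFun a := fun q => a (q.1 - 1, q.2)
  left_inv a := by funext q; simp
  right_inv a := by funext q; simp
  continuous_toFun := continuous_pi fun q => continuous_apply _
  continuous_invFun := continuous_pi fun q => continuous_apply _

variable {X : Type*} [TopologicalSpace X] (T : X ≃ₜ X) (U : ℕ → Set X)

/-- The good set: points whose full orbit avoids all the frontiers. -/
def X0 : Set X := {x | ∀ q : ℤ × ℕ, hpow T q.1 x ∉ frontier (U q.2)}

open scoped Classical in
/-- The symbolic code of a point. -/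
noncomputable def acode (x : X) : K := fun q => decide (hpow T q.1 x ∈ U q.2)

/-- The graph-code of a point. -/
noncomputable def code (x : X) : X × K := (x, acode T U x)

/-- The extension, as a subset of `X × K`. -/
def Cset : Set (X × K) := closure (code T U '' X0 T U)

/-- The skew product `T × shift`. -/
def SX : (X × K) ≃ₜ (X × K) := T.prodCongr shiftK

lemma X0_mem_T {x : X} (hx : x ∈ X0 T U) : T x ∈ X0 T U := by
  intro q
  have := hx (q.1 + 1, q.2)
  rwa [hpow_succ' T q.1 x, ← Prod.mk.eta (p := q)] at this

lemma X0_mem_Tsymm {x : X} (hx : x ∈ X0 T U) : T.symm x ∈ X0 T U := by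
  intro q
  have := hx (q.1 - 1, q.2)
  rwa [hpow_pred' T q.1 x, ← Prod.mk.eta (p := q)] at this

lemma image_T_X0 : T '' X0 T U = X0 T U := by
  apply Set.Subset.antisymm
  · rintro _ ⟨x, hx, rfl⟩; exact X0_mem_T T U hx
  · intro x hx
    exact ⟨T.symm x, X0_mem_Tsymm T U hx, T.apply_symm_apply x⟩

lemma SX_code (x : X) : SX T (code T U x) = code T U (T x) := by
  unfold SX code
  apply Prod.ext
  · rfl
  · show shiftK (acode T U x) = acode T U (T x)
    funext q
    show acode T U x (q.1 + 1, q.2) = acode T U (T x) q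
    unfold acode
    congr 1
    show (hpow T (q.1 + 1) x ∈ U q.2) = (hpow T q.1 (T x) ∈ U q.2)
    rw [hpow_succ']

lemma SX_image_Cset : SX T '' Cset T U = Cset T U := by
  unfold Cset
  rw [Homeomorph.image_closure]
  rw [← Set.image_comp]
  have : (SX T) ∘ (code T U) = (code T U) ∘ T := by
    funext x; exact SX_code T U x
  rw [this, Set.image_comp, image_T_X0]

lemma mem_Cset_SX {p : X × K} (hp : p ∈ Cset T U) : SX T p ∈ Cset T U := by
  rw [← SX_image_Cset T U]; exact Set.mem_image_of_mem _ hp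

lemma mem_Cset_SX_symm {p : X × K} (hp : p ∈ Cset T U) : (SX T).symm p ∈ Cset T U := by
  rw [← SX_image_Cset T U] at hp
  obtain ⟨r, hr, rfl⟩ := hp
  rwa [Homeomorph.symm_apply_apply]

/-- The restricted homeomorphism on the extension. -/
def TC : ↥(Cset T U) ≃ₜ ↥(Cset T U) where
  toFun c := ⟨SX T c.1, mem_Cset_SX T U c.2⟩
  invFun c := ⟨(SX T).symm c.1, mem_Cset_SX_symm T U c.2⟩
  left_inv c := by ext : 1; exact Homeomorph.symm_apply_apply _ _
  right_inv c := by ext : 1; exact Homeomorph.apply_symm_apply _ _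
  continuous_toFun :=
    Continuous.subtype_mk ((SX T).continuous.comp continuous_subtype_val) _
  continuous_invFun :=
    Continuous.subtype_mk ((SX T).symm.continuous.comp continuous_subtype_val) _

lemma good_of_mem_Cset (hU : ∀ i, IsOpen (U i)) {p : X × K} (hp : p ∈ Cset T U)
    (q : ℤ × ℕ) :
    (p.2 q = true → hpow T q.1 p.1 ∈ closure (U q.2)) ∧
    (p.2 q = false → hpow T q.1 p.1 ∉ U q.2) := by
  classical
  have key : Cset T U ⊆ ⋂ q : ℤ × ℕ, {p : X × K |
      (p.2 q = true → hpow T q.1 p.1 ∈ closure (U q.2)) ∧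
      (p.2 q = false → hpow T q.1 p.1 ∉ U q.2)} := by
    apply closure_minimal
    · rintro _ ⟨x, hx, rfl⟩
      simp only [Set.mem_iInter, Set.mem_setOf_eq]
      intro q
      constructor
      · intro h
        have hx' : hpow T q.1 x ∈ U q.2 := by
          have : acode T U x q = true := h
          unfold acode at this
          exact of_decide_eq_true this
        exact subset_closure hx'
      · intro h
        have : acode T U x q = false := h
        unfold acode at this
        exact of_decide_eq_false this
    · apply isClosed_iInter
      intro q
      have h1 : IsClosed {p : X × K | p.2 q = true → hpow T q.1 p.1 ∈ closure (U q.2)} := by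
        have : {p : X × K | p.2 q = true → hpow T q.1 p.1 ∈ closure (U q.2)}
            = {p : X × K | p.2 q = false} ∪ {p : X × K | hpow T q.1 p.1 ∈ closure (U q.2)} := by
          ext p
          simp only [Set.mem_setOf_eq, Set.mem_union, imp_iff_not_or, Bool.not_eq_true]
        rw [this]
        apply IsClosed.union
        · exact isClosed_singleton.preimage ((continuous_apply q).comp continuous_snd)
        · exact isClosed_closure.preimage ((hpow_continuous T q.1).comp continuous_fst)
      have h2 : IsClosed {p : X × K | p.2 q = false → hpow T q.1 p.1 ∉ U q.2} := by
        have : {p : X × K | p.2 q = false → hpow T q.1 p.1 ∉ U q.2}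
            = {p : X × K | p.2 q = true} ∪ {p : X × K | hpow T q.1 p.1 ∈ (U q.2)ᶜ} := by
          ext p
          simp only [Set.mem_setOf_eq, Set.mem_union, imp_iff_not_or, Bool.not_eq_false,
            Set.mem_compl_iff]
        rw [this]
        apply IsClosed.union
        · exact isClosed_singleton.preimage ((continuous_apply q).comp continuous_snd)
        · exact (hU q.2).isClosed_compl.preimage ((hpow_continuous T q.1).comp continuous_fst)
      exact h1.inter h2
  exact Set.mem_iInter.mp (key hp) q

lemma fiber_eq (hU : ∀ i, IsOpen (U i)) {p : X × K} (hp : p ∈ Cset T U)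
    (hx : p.1 ∈ X0 T U) : p = code T U p.1 := by
  classical
  apply Prod.ext
  · rfl
  · funext q
    have hg := good_of_mem_Cset T U hU hp q
    show p.2 q = acode T U p.1 q
    unfold acode
    cases hb : p.2 q with
    | true =>
      have hcl := hg.1 hb
      have hnf := hx q
      have : hpow T q.1 p.1 ∈ U q.2 := by
        by_contra hno
        exact hnf ⟨hcl, by rwa [(hU q.2).interior_eq]⟩
      exact (decide_eq_true this).symm
    | false =>
      have := hg.2 hb
      exact (decide_eq_false this).symm


lemma snd_inj [T2Space X] (hU : ∀ i, IsOpen (U i))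
    (hbasis : ∀ x V, IsOpen V → x ∈ V → ∃ i, x ∈ U i ∧ closure (U i) ⊆ V) :
    ∀ p ∈ Cset T U, ∀ p' ∈ Cset T U, p.2 = p'.2 → p = p' := by
  intro p hp p' hp' h2
  have hfst : p.1 = p'.1 := by
    by_contra hne
    obtain ⟨V, W, hV, hW, hxV, hyW, hVW⟩ := t2_separation hne
    obtain ⟨i, hxU, hcl⟩ := hbasis p.1 V hV hxV
    have hg := good_of_mem_Cset T U hU hp (0, i)
    have hg' := good_of_mem_Cset T U hU hp' (0, i)
    cases hb : p.2 (0, i) with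
    | true =>
      have h3 : hpow T 0 p'.1 ∈ closure (U i) := hg'.1 (by rw [← h2]; exact hb)
      rw [hpow_zero] at h3
      exact hVW.le_bot ⟨hcl h3, hyW⟩
    | false =>
      have h3 := hg.2 hb
      rw [hpow_zero] at h3
      exact h3 hxU
  exact Prod.ext hfst h2

end ZDExt

/-- **Theorem A.5.** Every t.d.s. `(X,T)` has an almost one to one zero dimensional
extension; if `(X,T)` is minimal, the extension is minimal. -/
theorem zero_dimensional_almost_one_to_one_extension
    {X : Type*} [MetricSpace X] [CompactSpace X] (T : X ≃ₜ X) :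
    ∃ (X' : Type) (_ : MetricSpace X') (_ : CompactSpace X') (T' : X' ≃ₜ X')
      (τ : X' → X),
      Continuous τ ∧ Surjective τ ∧ (∀ x', τ (T' x') = T (τ x')) ∧
      AlmostOneToOne τ ∧
      TopologicalSpace.IsTopologicalBasis {s : Set X' | IsClopen s} ∧
      (IsMinimalTDS T → IsMinimalTDS T') := by
  classical
  -- A countable family of open sets forming a "regular" basis.
  obtain ⟨U, hU, hbasis⟩ : ∃ U : ℕ → Set X, (∀ i, IsOpen (U i)) ∧
      ∀ x V, IsOpen V → x ∈ V → ∃ i, x ∈ U i ∧ closure (U i) ⊆ V := by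
    obtain ⟨b, bc, -, hb⟩ := TopologicalSpace.exists_countable_basis X
    obtain ⟨U, hUr⟩ := (bc.insert ∅).exists_eq_range (Set.insert_nonempty _ _)
    refine ⟨U, ?_, ?_⟩
    · intro i
      have hmem : U i ∈ insert ∅ b := hUr ▸ Set.mem_range_self i
      rcases Set.mem_insert_iff.mp hmem with h | h
      · rw [h]; exact isOpen_empty
      · exact hb.isOpen h
    · intro x V hV hxV
      obtain ⟨ε, hε, hball⟩ := Metric.isOpen_iff.mp hV x hxV
      obtain ⟨W, hWb, hxW, hWsub⟩ := hb.exists_subset_of_mem_open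
        (Metric.mem_ball_self (by linarith : (0:ℝ) < ε/2)) Metric.isOpen_ball
      have hmem : W ∈ insert ∅ b := Set.mem_insert_of_mem _ hWb
      rw [hUr] at hmem
      obtain ⟨i, hi⟩ := hmem
      refine ⟨i, hi ▸ hxW, ?_⟩
      rw [hi]
      calc closure W ⊆ closure (Metric.ball x (ε/2)) := closure_mono hWsub
        _ ⊆ Metric.closedBall x (ε/2) := Metric.closure_ball_subset_closedBall
        _ ⊆ Metric.ball x ε := Metric.closedBall_subset_ball (by linarith)
        _ ⊆ V := hball
  -- The residual set of points whose orbit avoids all frontiers.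
  have hX0eq : ZDExt.X0 T U = ⋂ q : ℤ × ℕ, hpow T q.1 ⁻¹' (frontier (U q.2))ᶜ := by
    ext x
    simp [ZDExt.X0, Set.mem_iInter]
  have hX0dense : Dense (ZDExt.X0 T U) := by
    rw [hX0eq]
    apply dense_iInter_of_isOpen
    · exact fun q => isClosed_frontier.isOpen_compl.preimage (hpow_continuous T q.1)
    · intro q
      have hdc : Dense (frontier (U q.2))ᶜ := by
        rw [← interior_eq_empty_iff_dense_compl, ← frontier_compl]
        exact interior_frontier (hU q.2).isClosed_compl
      have : hpow T q.1 ⁻¹' (frontier (U q.2))ᶜ = (hpowInt T q.1) ⁻¹' (frontier (U q.2))ᶜ := rfl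
      rw [this, dense_iff_closure_eq, ← Homeomorph.preimage_closure, hdc.closure_eq,
        Set.preimage_univ]
  have hX0gd : IsGδ (ZDExt.X0 T U) := by
    rw [hX0eq]
    exact IsGδ.iInter fun q =>
      ((isClosed_frontier.isOpen_compl).preimage (hpow_continuous T q.1)).isGδ
  set Cs := ZDExt.Cset T U with hCs
  have hCscl : IsClosed Cs := isClosed_closure
  haveI : CompactSpace ↥Cs := isCompact_iff_compactSpace.mp hCscl.isCompact
  set e : ↥Cs → ZDExt.K := fun c => (c : X × ZDExt.K).2 with he
  have he_cont : Continuous e := continuous_snd.comp continuous_subtype_val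
  have he_inj : Injective e := by
    intro c c' hcc
    exact Subtype.ext (ZDExt.snd_inj T U hU hbasis _ c.2 _ c'.2 hcc)
  have h : ↥Cs ≃ₜ ↥(Set.range e) :=
    Continuous.homeoOfEquivCompactToT2 (f := Equiv.ofInjective e he_inj)
      (he_cont.subtype_mk _)
  set T'C := ZDExt.TC T U with hT'C
  set T'' : ↥(Set.range e) ≃ₜ ↥(Set.range e) := (h.symm.trans T'C).trans h with hT''
  set τ : ↥(Set.range e) → X := fun p => ((h.symm p : ↥Cs) : X × ZDExt.K).1 with hτ
  have hτ_cont : Continuous τ :=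
    (continuous_fst.comp continuous_subtype_val).comp h.symm.continuous
  have hτh : ∀ c : ↥Cs, τ (h c) = ((c : X × ZDExt.K)).1 := by
    intro c
    show ((h.symm (h c) : ↥Cs) : X × ZDExt.K).1 = _
    rw [Homeomorph.symm_apply_apply]
  -- fibers over X0 are singletons at the level of Cs
  have hfiber : ∀ c c' : ↥Cs, ((c : X × ZDExt.K)).1 = ((c' : X × ZDExt.K)).1 →
      ((c : X × ZDExt.K)).1 ∈ ZDExt.X0 T U → c = c' := by
    intro c c' hcc hc0
    apply Subtype.ext
    rw [ZDExt.fiber_eq T U hU c.2 hc0, ZDExt.fiber_eq T U hU c'.2 (hcc ▸ hc0), hcc]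
  -- code points are in Cs
  have hcode_mem : ∀ x ∈ ZDExt.X0 T U, ZDExt.code T U x ∈ Cs := fun x hx =>
    subset_closure (Set.mem_image_of_mem _ hx)
  -- surjectivity
  have hfst_univ : Prod.fst '' Cs = Set.univ := by
    apply Set.eq_univ_of_univ_subset
    have h1 : ZDExt.X0 T U ⊆ Prod.fst '' Cs := fun x hx =>
      ⟨ZDExt.code T U x, hcode_mem x hx, rfl⟩
    calc Set.univ = closure (ZDExt.X0 T U) := hX0dense.closure_eq.symm
      _ ⊆ closure (Prod.fst '' Cs) := closure_mono h1
      _ = Prod.fst '' Cs := (hCscl.isCompact.image continuous_fst).isClosed.closure_eq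
  have hτ_surj : Surjective τ := by
    intro x
    have : x ∈ Prod.fst '' Cs := hfst_univ ▸ Set.mem_univ x
    obtain ⟨p, hp, hpx⟩ := this
    exact ⟨h ⟨p, hp⟩, by rw [hτh]; exact hpx⟩
  -- intertwining
  have hτT : ∀ p, τ (T'' p) = T (τ p) := by
    intro p
    have h1 : h.symm (T'' p) = T'C (h.symm p) := by
      show h.symm (h (T'C (h.symm p))) = T'C (h.symm p)
      rw [Homeomorph.symm_apply_apply]
    show ((h.symm (T'' p) : ↥Cs) : X × ZDExt.K).1 = _
    rw [h1]
    rfl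
  -- almost one to one
  have hA : AlmostOneToOne τ := by
    refine ⟨τ ⁻¹' (ZDExt.X0 T U), isGδ_preimage hτ_cont hX0gd, ?_, ?_⟩
    · -- density
      have hDC : Dense {c : ↥Cs | (c : X × ZDExt.K) ∈ ZDExt.code T U '' ZDExt.X0 T U} := by
        intro c
        rw [closure_subtype]
        have him : Subtype.val '' {c : ↥Cs | (c : X × ZDExt.K) ∈ ZDExt.code T U '' ZDExt.X0 T U}
            = Cs ∩ (ZDExt.code T U '' ZDExt.X0 T U) :=
          Subtype.image_preimage_coe _ _
        rw [him, Set.inter_eq_self_of_subset_right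
          (show ZDExt.code T U '' ZDExt.X0 T U ⊆ Cs from subset_closure)]
        exact c.2
      have hDX' : Dense (h '' {c : ↥Cs |
          (c : X × ZDExt.K) ∈ ZDExt.code T U '' ZDExt.X0 T U}) := by
        rw [dense_iff_closure_eq, ← Homeomorph.image_closure, hDC.closure_eq,
          Set.image_univ, Homeomorph.range_coe]
      apply hDX'.mono
      rintro _ ⟨c, hc, rfl⟩
      obtain ⟨x, hx, hcx⟩ := hc
      show τ (h c) ∈ ZDExt.X0 T U
      rw [hτh]
      have hfst : ((c : X × ZDExt.K)).1 = x := by rw [← hcx]; rfl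
      rwa [hfst]
    · -- singleton fibers
      intro a ha
      have haX0 : τ a ∈ ZDExt.X0 T U := ha
      ext r
      simp only [Set.mem_preimage, Set.mem_singleton_iff]
      constructor
      · intro hr
        have h1 : ((h.symm r : ↥Cs) : X × ZDExt.K).1 = ((h.symm a : ↥Cs) : X × ZDExt.K).1 := hr
        have h2 := hfiber (h.symm r) (h.symm a) h1 (by rw [h1]; exact haX0)
        calc r = h (h.symm r) := (Homeomorph.apply_symm_apply _ _).symm
          _ = h (h.symm a) := by rw [h2]
          _ = a := Homeomorph.apply_symm_apply _ _
      · intro hr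
        rw [hr]
  -- minimality
  have hmin' : IsMinimalTDS T → IsMinimalTDS T'' := by
    intro hmin
    have hminC : IsMinimalTDS T'C := by
      intro p
      rw [dense_iff_closure_eq]
      set M := closure (zorbit T'C p) with hMdef
      have hMinv : ∀ n : ℤ, ∀ m ∈ M, hpow T'C n m ∈ M := by
        intro n m hm
        have h1 : hpow T'C n '' zorbit T'C p ⊆ zorbit T'C p := by
          rintro _ ⟨_, ⟨k, rfl⟩, rfl⟩
          exact ⟨n + k, by exact hpow_add T'C n k p⟩
        have h2 : hpow T'C n '' M ⊆ M :=
          calc hpow T'C n '' M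
              ⊆ closure (hpow T'C n '' zorbit T'C p) :=
                image_closure_subset_closure_image (hpow_continuous _ n)
            _ ⊆ M := closure_mono h1
        exact h2 (Set.mem_image_of_mem _ hm)
      set f : ↥Cs → X := fun c => ((c : X × ZDExt.K)).1 with hf
      have hf_cont : Continuous f := continuous_fst.comp continuous_subtype_val
      have hsemi : ∀ c, f (T'C c) = T (f c) := fun c => rfl
      have hMcomp : IsCompact M := isClosed_closure.isCompact
      set D := f '' M with hD
      have hDcl : IsClosed D := (hMcomp.image hf_cont).isClosed
      have hDinv : ∀ n : ℤ, ∀ x ∈ D, hpow T n x ∈ D := by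
        rintro n _ ⟨m, hm, rfl⟩
        exact ⟨hpow T'C n m, hMinv n m hm, hpow_semiconj T'C T f hsemi n m⟩
      have hDuniv : D = Set.univ := by
        have hpmem : f p ∈ D :=
          Set.mem_image_of_mem f (subset_closure ⟨0, hpow_zero _ _⟩)
        have horb : zorbit T (f p) ⊆ D := by
          rintro _ ⟨n, rfl⟩
          exact hDinv n _ hpmem
        apply Set.eq_univ_of_univ_subset
        calc Set.univ = closure (zorbit T (f p)) := (hmin (f p)).closure_eq.symm
          _ ⊆ closure D := closure_mono horb
          _ = D := hDcl.closure_eq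
      have hvalM : IsClosed (Subtype.val '' M) :=
        (hMcomp.image continuous_subtype_val).isClosed
      have hcodesub : ZDExt.code T U '' ZDExt.X0 T U ⊆ Subtype.val '' M := by
        rintro _ ⟨x, hx, rfl⟩
        have hxD : x ∈ D := hDuniv ▸ Set.mem_univ x
        obtain ⟨m, hm, hfm⟩ := hxD
        have hmval : (m : X × ZDExt.K) = ZDExt.code T U x := by
          have := ZDExt.fiber_eq T U hU m.2 (by
            show ((m : X × ZDExt.K)).1 ∈ ZDExt.X0 T U
            rw [show ((m : X × ZDExt.K)).1 = f m from rfl, hfm]; exact hx)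
          rw [this]
          have : ((m : X × ZDExt.K)).1 = x := hfm
          rw [this]
        exact ⟨m, hm, hmval⟩
      have hCs_sub : Cs ⊆ Subtype.val '' M := closure_minimal hcodesub hvalM
      apply Set.eq_univ_of_forall
      intro c
      obtain ⟨m, hm, hmc⟩ := hCs_sub c.2
      have : m = c := Subtype.ext hmc
      rwa [← this]
    exact isMinimalTDS_conj h T'C hminC
  -- assemble
  haveI hCX' : CompactSpace ↥(Set.range e) :=
    isCompact_iff_compactSpace.mp (isCompact_range he_cont)
  have hbasisX' : TopologicalSpace.IsTopologicalBasis
      {s : Set ↥(Set.range e) | IsClopen s} := loc_compact_Haus_tot_disc_of_zero_dim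
  letI : MetricSpace ↥(Set.range e) := TopologicalSpace.metrizableSpaceMetric _
  exact ⟨↥(Set.range e), inferInstance, hCX', T'', τ, hτ_cont, hτ_surj, hτT, hA,
    hbasisX', hmin'⟩
end

section
/- Let X be a compact metric space. For every δ > 0 there exists an admissible cover α of X such that every element of α is nonempty and has diameter less than δ. -/
open Filter Topology Function Set

/-- A finite family `A` of subsets of `X` is an admissible cover: the sets are closed,
cover `X`, intersect pairwise only in their boundaries, and the union of their
boundaries has empty interior. -/
def IsAdmissibleCover {X : Type*} [TopologicalSpace X] {ι : Type*} (A : ι → Set X) : Prop :=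
  (⋃ i, A i) = Set.univ ∧ (∀ i, IsClosed (A i)) ∧
  (∀ i j, i ≠ j → A i ∩ A j = frontier (A i) ∩ frontier (A j)) ∧
  interior (⋃ i, frontier (A i)) = ∅

/-- Finite unions of closed sets with empty interior have empty interior. -/
lemma interior_iUnion_eq_empty_aux {X : Type*} [TopologicalSpace X] :
    ∀ (n : ℕ) (f : Fin n → Set X), (∀ i, IsClosed (f i)) → (∀ i, interior (f i) = ∅) →
    interior (⋃ i, f i) = ∅ := by
  intro n
  induction n with
  | zero => intro f _ _; simp
  | succ n ih =>
      intro f hc hi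
      have hsplit : (⋃ i, f i) = f 0 ∪ ⋃ i : Fin n, f i.succ := by
        ext x
        simp only [mem_iUnion, mem_union]
        constructor
        · rintro ⟨i, hx⟩
          rcases Fin.eq_zero_or_eq_succ i with h | ⟨j, rfl⟩
          · exact Or.inl (h ▸ hx)
          · exact Or.inr ⟨j, hx⟩
        · rintro (hx | ⟨j, hx⟩)
          · exact ⟨0, hx⟩
          · exact ⟨j.succ, hx⟩
      have htail : interior (⋃ i : Fin n, f i.succ) = ∅ :=
        ih (fun i => f i.succ) (fun i => hc _) (fun i => hi _)
      rw [hsplit]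
      have hclosed : IsClosed (⋃ i : Fin n, f i.succ) :=
        isClosed_iUnion_of_finite (fun i => hc _)
      -- interior of union of two closed sets with empty interior is empty
      by_contra h
      obtain ⟨x, hx⟩ := Set.nonempty_iff_ne_empty.2 h
      -- x ∈ interior (f 0 ∪ T); consider the open set interior (f 0 ∪ T) \ f 0
      set T := ⋃ i : Fin n, f i.succ
      have hU : IsOpen (interior (f 0 ∪ T) \ f 0) :=
        isOpen_interior.sdiff (hc 0)
      rcases Classical.em ((interior (f 0 ∪ T) \ f 0) = ∅) with he | hne
      · -- then interior (f 0 ∪ T) ⊆ f 0 so contained in interior f 0 = ∅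
        have : interior (f 0 ∪ T) ⊆ f 0 := fun y hy => by
          by_contra hy0
          exact absurd (he ▸ ⟨hy, hy0⟩ : y ∈ (∅ : Set X)) (notMem_empty y)
        have : interior (f 0 ∪ T) ⊆ interior (f 0) :=
          interior_maximal this isOpen_interior
        rw [hi 0] at this
        exact absurd (this hx) (notMem_empty x)
      · obtain ⟨y, hy⟩ := Set.nonempty_iff_ne_empty.2 hne
        have hyT : interior (f 0 ∪ T) \ f 0 ⊆ T := by
          intro z hz
          rcases (interior_subset hz.1) with h0 | hT
          · exact absurd h0 hz.2
          · exact hT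
        have : interior (f 0 ∪ T) \ f 0 ⊆ interior T :=
          interior_maximal hyT hU
        rw [htail] at this
        exact absurd (this hy) (notMem_empty y)

/-- Closures of disjoint open sets meet only in their frontiers. -/
lemma closure_inter_subset_frontier_aux {X : Type*} [TopologicalSpace X] {U V : Set X}
    (hU : IsOpen U) (hV : IsOpen V) (h : U ∩ V = ∅) :
    closure U ∩ closure V ⊆ frontier (closure U) ∩ frontier (closure V) := by
  have key : ∀ {A B : Set X}, IsOpen A → IsOpen B → A ∩ B = ∅ →
      ∀ x, x ∈ closure A → x ∈ closure B → x ∉ interior (closure A) := by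
    intro A B hA hB hAB x hxA hxB hint
    obtain ⟨y, hyI, hyB⟩ := mem_closure_iff.1 hxB _ isOpen_interior hint
    obtain ⟨z, hzB, hzA⟩ := mem_closure_iff.1 (interior_subset hyI) _ hB hyB
    exact absurd (hAB ▸ (⟨hzA, hzB⟩ : z ∈ A ∩ B) : z ∈ (∅ : Set X)) (notMem_empty z)
  intro x hx
  obtain ⟨hxU, hxV⟩ := hx
  have hVU : V ∩ U = ∅ := by rw [inter_comm] at h; exact h
  have h1 : x ∉ interior (closure U) := key hU hV h x hxU hxV
  have h2 : x ∉ interior (closure V) := key hV hU hVU x hxV hxU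
  constructor
  · simp only [frontier, closure_closure, mem_diff]
    exact ⟨hxU, h1⟩
  · simp only [frontier, closure_closure, mem_diff]
    exact ⟨hxV, h2⟩

/-- **Lemma A.3.** In a compact metric space, for every `δ > 0` there is an admissible
cover all of whose elements are nonempty and of diameter less than `δ`. -/
theorem exists_admissible_cover_of_small_diam
    {X : Type*} [MetricSpace X] [CompactSpace X] (δ : ℝ) (hδ : 0 < δ) :
    ∃ (k : ℕ) (A : Fin k → Set X), IsAdmissibleCover A ∧
      ∀ i, (A i).Nonempty ∧ Metric.diam (A i) < δ := by
  classical
  have hδ4 : (0:ℝ) < δ / 4 := by linarith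
  obtain ⟨t, -, htf, htc⟩ :=
    finite_cover_balls_of_compact (isCompact_univ (X := X)) hδ4
  set n := htf.toFinset.card with hn
  have e : {x // x ∈ htf.toFinset} ≃ Fin n := htf.toFinset.equivFin
  set c : Fin n → X := fun i => (e.symm i : X) with hc
  set D : Fin n → Set X := fun i => Metric.closedBall (c i) (δ / 4) with hD
  have hDclosed : ∀ i, IsClosed (D i) := fun i => Metric.isClosed_closedBall
  have hDcover : (⋃ i, D i) = univ := by
    apply eq_univ_of_forall
    intro x
    have := htc (mem_univ x)
    simp only [mem_iUnion] at this
    obtain ⟨y, hyt, hxy⟩ := this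
    refine mem_iUnion.2 ⟨e ⟨y, htf.mem_toFinset.2 hyt⟩, ?_⟩
    have : c (e ⟨y, htf.mem_toFinset.2 hyt⟩) = y := by
      simp [hc]
    rw [hD]
    simp only [this]
    exact Metric.ball_subset_closedBall hxy
  set V : Fin n → Set X := fun i => interior (D i) \ ⋃ j : Fin n, ⋃ (_ : j < i), D j with hV
  have hVopen : ∀ i, IsOpen (V i) := by
    intro i
    exact isOpen_interior.sdiff (isClosed_iUnion_of_finite fun j =>
      isClosed_iUnion_of_finite fun _ => hDclosed j)
  have hVD : ∀ i, V i ⊆ D i := fun i => (diff_subset).trans interior_subset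
  have hVdisj : ∀ i j, i ≠ j → V i ∩ V j = ∅ := by
    have key : ∀ i j : Fin n, j < i → V i ∩ V j = ∅ := by
      intro i j hji
      ext x
      simp only [mem_inter_iff, mem_empty_iff_false, iff_false, not_and]
      intro hxi hxj
      exact hxi.2 (mem_iUnion.2 ⟨j, mem_iUnion.2 ⟨hji, hVD j hxj⟩⟩)
    intro i j hij
    rcases lt_or_gt_of_ne hij with h | h
    · rw [inter_comm]; exact key j i h
    · exact key i j h
  set B : Fin n → Set X := fun i => closure (V i) with hB
  have hBclosed : ∀ i, IsClosed (B i) := fun i => isClosed_closure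
  have hBD : ∀ i, B i ⊆ D i := fun i =>
    closure_minimal (hVD i) (hDclosed i)
  have hBcover : (⋃ i, B i) = univ := by
    set N : Set X := ⋃ i, frontier (D i) with hN
    have hNclosed : IsClosed N :=
      isClosed_iUnion_of_finite fun i => isClosed_frontier
    have hNint : interior N = ∅ :=
      interior_iUnion_eq_empty_aux n _ (fun i => isClosed_frontier)
        (fun i => interior_frontier (hDclosed i))
    have hsub : univ \ N ⊆ ⋃ i, V i := by
      intro x hx
      have hxD : {i : Fin n | x ∈ D i}.Nonempty := by
        have := hDcover ▸ mem_univ x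
        obtain ⟨i, hi⟩ := mem_iUnion.1 this
        exact ⟨i, hi⟩
      have hfin : ({i : Fin n | x ∈ D i}).Finite := Set.toFinite _
      obtain ⟨i₀, hi₀, hmin⟩ : ∃ i₀ ∈ {i : Fin n | x ∈ D i}, ∀ j ∈ {i : Fin n | x ∈ D i},
          id j ≤ id i₀ → id i₀ = id j := by
        obtain ⟨i₀, hi₀, hm⟩ := hfin.exists_minimal hxD
        exact ⟨i₀, hi₀, fun j hj hle => le_antisymm (hm hj hle) hle⟩
      refine mem_iUnion.2 ⟨i₀, ?_, ?_⟩
      · -- x ∈ interior (D i₀)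
        have hxfr : x ∉ frontier (D i₀) := fun hf =>
          hx.2 (mem_iUnion.2 ⟨i₀, hf⟩)
        have : x ∈ closure (D i₀) := subset_closure hi₀
        rw [frontier, mem_diff] at hxfr
        push_neg at hxfr
        exact hxfr this
      · -- x ∉ earlier D j
        intro hmem
        obtain ⟨j, hj⟩ := mem_iUnion.1 hmem
        obtain ⟨hji, hxj⟩ := mem_iUnion.1 hj
        have := hmin j hxj (le_of_lt hji)
        exact absurd this (ne_of_gt hji)
    have hdense : Dense (⋃ i, V i) := by
      have h1 : Dense (univ \ N) := by
        have : Dense (Nᶜ) := by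
          rw [← interior_eq_empty_iff_dense_compl] at *
          exact hNint
        simpa [compl_eq_univ_diff] using this
      exact Dense.mono hsub h1
    have hclosedU : IsClosed (⋃ i, B i) :=
      isClosed_iUnion_of_finite hBclosed
    have : closure (⋃ i, V i) ⊆ ⋃ i, B i := by
      apply closure_minimal _ hclosedU
      exact iUnion_mono fun i => subset_closure
    rw [hdense.closure_eq] at this
    exact eq_univ_of_univ_subset this
  have hBinter : ∀ i j, i ≠ j → B i ∩ B j = frontier (B i) ∩ frontier (B j) := by
    intro i j hij
    apply Subset.antisymm
    · exact closure_inter_subset_frontier_aux (hVopen i) (hVopen j) (hVdisj i j hij)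
    · exact inter_subset_inter ((hBclosed i).frontier_subset) ((hBclosed j).frontier_subset)
  have hBfront : interior (⋃ i, frontier (B i)) = ∅ :=
    interior_iUnion_eq_empty_aux n _ (fun i => isClosed_frontier)
      (fun i => interior_frontier (hBclosed i))
  -- filter to the nonempty pieces
  set s : Finset (Fin n) := Finset.univ.filter (fun i => (B i).Nonempty) with hs
  set k := s.card with hk
  have es : {x // x ∈ s} ≃ Fin k := s.equivFin
  set A : Fin k → Set X := fun m => B ((es.symm m : Fin n)) with hA
  refine ⟨k, A, ⟨?_, ?_, ?_, ?_⟩, ?_⟩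
  · -- cover
    apply eq_univ_of_forall
    intro x
    have := hBcover ▸ mem_univ x
    obtain ⟨i, hi⟩ := mem_iUnion.1 this
    have his : i ∈ s := by
      rw [hs, Finset.mem_filter]
      exact ⟨Finset.mem_univ i, ⟨x, hi⟩⟩
    refine mem_iUnion.2 ⟨es ⟨i, his⟩, ?_⟩
    simp [hA]
    exact hi
  · intro m; exact hBclosed _
  · intro m m' hmm'
    apply hBinter
    intro hEq
    apply hmm'
    have : (es.symm m : {x // x ∈ s}) = es.symm m' := Subtype.ext hEq
    exact es.symm.injective this
  · have : (⋃ m, frontier (A m)) ⊆ ⋃ i, frontier (B i) := by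
      apply iUnion_subset
      intro m
      exact subset_iUnion (fun i => frontier (B i)) _
    have h2 : interior (⋃ m, frontier (A m)) ⊆ interior (⋃ i, frontier (B i)) :=
      interior_mono this
    rw [hBfront] at h2
    exact eq_empty_of_subset_empty h2
  · intro m
    constructor
    · exact (Finset.mem_filter.1 (es.symm m).2).2
    · have h1 : A m ⊆ D (es.symm m : Fin n) := hBD _
      have h2 : Metric.diam (A m) ≤ Metric.diam (D (es.symm m : Fin n)) :=
        Metric.diam_mono h1 Metric.isBounded_closedBall
      have h3 : Metric.diam (D (es.symm m : Fin n)) ≤ 2 * (δ / 4) :=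
        Metric.diam_closedBall (le_of_lt hδ4)
      linarith
end

section
/- Let X be a compact metric space. If α and β are admissible covers of X, then their join α ∨ β (the cover consisting of all nonempty sets A ∩ B with A ∈ α and B ∈ β) is also an admissible cover of X. -/
open Filter Topology Function Set

lemma interior_union_empty_of_closed {X : Type*} [TopologicalSpace X] {S T : Set X}
    (hS : IsClosed S) (hT : IsClosed T) (hiS : interior S = ∅) (hiT : interior T = ∅) :
    interior (S ∪ T) = ∅ := by
  have h1 : interior (S ∪ T) \ S ⊆ interior T := by
    apply interior_maximal
    · intro x hx
      rcases interior_subset hx.1 with h | h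
      · exact absurd h hx.2
      · exact h
    · exact isOpen_interior.sdiff hS
  have h2 : interior (S ∪ T) ⊆ S := by
    intro x hx
    by_contra hxS
    have : x ∈ interior T := h1 ⟨hx, hxS⟩
    rw [hiT] at this; exact this
  have : interior (S ∪ T) ⊆ interior S :=
    interior_maximal h2 isOpen_interior
  rw [hiS] at this
  exact eq_empty_of_subset_empty this

/-- **Lemma A.4.** The join of two admissible covers of a compact metric space is
admissible. -/
theorem isAdmissibleCover_join
    {X : Type*} [MetricSpace X] [CompactSpace X] {k l : ℕ}
    (A : Fin k → Set X) (B : Fin l → Set X)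
    (hA : IsAdmissibleCover A) (hB : IsAdmissibleCover B) :
    IsAdmissibleCover (fun ij : Fin k × Fin l => A ij.1 ∩ B ij.2) := by
  obtain ⟨hAcov, hAcl, hApair, hAint⟩ := hA
  obtain ⟨hBcov, hBcl, hBpair, hBint⟩ := hB
  -- key: a point in two distinct join pieces lies in the frontier of each
  have key : ∀ (i i' : Fin k) (j j' : Fin l), (i, j) ≠ (i', j') → ∀ x,
      x ∈ A i ∩ B j → x ∈ A i' ∩ B j' → x ∈ frontier (A i ∩ B j) := by
    intro i i' j j' hne x hx hx'
    rw [((hAcl i).inter (hBcl j)).frontier_eq]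
    refine ⟨hx, fun hint => ?_⟩
    rw [interior_inter] at hint
    by_cases hii : i = i'
    · have hjj : j ≠ j' := by
        intro hjj; exact hne (by rw [hii, hjj])
      have : x ∈ frontier (B j) ∩ frontier (B j') := by
        rw [← hBpair j j' hjj]; exact ⟨hx.2, hx'.2⟩
      exact disjoint_interior_frontier.ne_of_mem hint.2 this.1 rfl
    · have : x ∈ frontier (A i) ∩ frontier (A i') := by
        rw [← hApair i i' hii]; exact ⟨hx.1, hx'.1⟩
      exact disjoint_interior_frontier.ne_of_mem hint.1 this.1 rfl
  refine ⟨?_, ?_, ?_, ?_⟩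
  · ext x
    simp only [mem_iUnion, mem_univ, iff_true]
    have hx1 : x ∈ ⋃ i, A i := by rw [hAcov]; trivial
    have hx2 : x ∈ ⋃ j, B j := by rw [hBcov]; trivial
    obtain ⟨i, hi⟩ := mem_iUnion.1 hx1
    obtain ⟨j, hj⟩ := mem_iUnion.1 hx2
    exact ⟨(i, j), hi, hj⟩
  · exact fun ij => (hAcl ij.1).inter (hBcl ij.2)
  · rintro ⟨i, j⟩ ⟨i', j'⟩ hne
    apply Subset.antisymm
    · rintro x ⟨hx, hx'⟩
      exact ⟨key i i' j j' hne x hx hx',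
        key i' i j' j (fun h => hne (by rw [Prod.mk.injEq] at h ⊢; exact ⟨h.1.symm, h.2.symm⟩)) x hx' hx⟩
    · rintro x ⟨hx, hx'⟩
      exact ⟨frontier_subset_closure.trans
        (((hAcl i).inter (hBcl j)).closure_subset) hx,
        frontier_subset_closure.trans
        (((hAcl i').inter (hBcl j')).closure_subset) hx'⟩
  · have hsub : (⋃ ij : Fin k × Fin l, frontier (A ij.1 ∩ B ij.2)) ⊆
        (⋃ i, frontier (A i)) ∪ (⋃ j, frontier (B j)) := by
      intro x hx
      obtain ⟨⟨i, j⟩, hij⟩ := mem_iUnion.1 hx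
      rcases frontier_inter_subset _ _ hij with h | h
      · exact Or.inl (mem_iUnion.2 ⟨i, h.1⟩)
      · exact Or.inr (mem_iUnion.2 ⟨j, h.2⟩)
    have hclA : IsClosed (⋃ i, frontier (A i)) :=
      isClosed_iUnion_of_finite fun i => isClosed_frontier
    have hclB : IsClosed (⋃ j, frontier (B j)) :=
      isClosed_iUnion_of_finite fun j => isClosed_frontier
    have := interior_union_empty_of_closed hclA hclB hAint hBint
    exact eq_empty_of_subset_empty ((interior_mono hsub).trans this.subset)
end
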